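/- Let G be a connected graph with Tr₂(G) = k, k ≥ 3. Then there exists a 2-transitive partition {V₁, ..., V_k} of G such that |V_k| = 1, |V_{k−1}| = 2, and |V_{k−i}| ≤ 2·3^{i−1} for all 2 ≤ i ≤ k−2. -/

import Mathlib

open SimpleGraph

def TwoTransPart {V : Type*} (G : SimpleGraph V) (k : ℕ) (P : Fin k → Set V) : Prop :=
  (∀ i, (P i).Nonempty) ∧ (∀ v, ∃! i, v ∈ P i) ∧
    ∀ i j : Fin k, i < j → ∀ v ∈ P j,
      ∃ u w, u ∈ P i ∧ w ∈ P i ∧ u ≠ w ∧ G.Adj u v ∧ G.Adj w v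

/-- The 2-transitivity `Tr₂(G)`: the maximum size of a 2-transitive partition of `G`. -/
noncomputable def tr2 {V : Type*} (G : SimpleGraph V) : ℕ :=
  sSup {k | ∃ P : Fin k → Set V, TwoTransPart G k P}

section Aux

variable {V : Type*}

open Classical in
/-- A choice of two distinct neighbors of `v` inside `A`, if such exist; else `∅`. -/
noncomputable def pick (G : SimpleGraph V) (A : Set V) (v : V) : Set V :=
  if h : ∃ u w, u ∈ A ∧ w ∈ A ∧ u ≠ w ∧ G.Adj u v ∧ G.Adj w v then
    {h.choose, h.choose_spec.choose} else ∅

lemma pick_subset (G : SimpleGraph V) (A : Set V) (v : V) : pick G A v ⊆ A := by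
  classical
  unfold pick
  split_ifs with h
  · obtain ⟨h1, h2, -⟩ := h.choose_spec.choose_spec
    intro x hx
    rcases hx with hx | hx <;> subst hx <;> assumption
  · exact Set.empty_subset A

lemma pick_ncard_le (G : SimpleGraph V) (A : Set V) (v : V) : (pick G A v).ncard ≤ 2 := by
  classical
  unfold pick
  split_ifs with h
  · exact (Set.ncard_insert_le _ _).trans (by simp)
  · simp

lemma pick_spec (G : SimpleGraph V) (A : Set V) (v : V)
    (h : ∃ u w, u ∈ A ∧ w ∈ A ∧ u ≠ w ∧ G.Adj u v ∧ G.Adj w v) :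
    ∃ u w, u ∈ pick G A v ∧ w ∈ pick G A v ∧ u ≠ w ∧ G.Adj u v ∧ G.Adj w v := by
  classical
  unfold pick
  rw [dif_pos h]
  obtain ⟨-, -, hne, ha1, ha2⟩ := h.choose_spec.choose_spec
  exact ⟨_, _, by simp, by simp, hne, ha1, ha2⟩

lemma pick_ncard_eq (G : SimpleGraph V) (A : Set V) (v : V)
    (h : ∃ u w, u ∈ A ∧ w ∈ A ∧ u ≠ w ∧ G.Adj u v ∧ G.Adj w v) :
    (pick G A v).ncard = 2 := by
  classical
  unfold pick
  rw [dif_pos h]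
  obtain ⟨-, -, hne, -⟩ := h.choose_spec.choose_spec
  exact Set.ncard_pair hne

/-- Cumulative levels of the pruned partition, from the top down. -/
noncomputable def Tset (G : SimpleGraph V) (F : ℕ → Set V) (v₀ : V) : ℕ → Set V
  | 0 => {v₀}
  | d + 1 => Tset G F v₀ d ∪ ⋃ u ∈ Tset G F v₀ d, pick G (F d) u

/-- Levels of the pruned partition, from the top down. -/
noncomputable def Sset (G : SimpleGraph V) (F : ℕ → Set V) (v₀ : V) : ℕ → Set V
  | 0 => {v₀}
  | d + 1 => ⋃ u ∈ Tset G F v₀ d, pick G (F d) u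

lemma Tset_succ (G : SimpleGraph V) (F : ℕ → Set V) (v₀ : V) (d : ℕ) :
    Tset G F v₀ (d + 1) = Tset G F v₀ d ∪ Sset G F v₀ (d + 1) := rfl

lemma Sset_subset_Tset (G : SimpleGraph V) (F : ℕ → Set V) (v₀ : V) {e d : ℕ} (h : e ≤ d) :
    Sset G F v₀ e ⊆ Tset G F v₀ d := by
  induction d with
  | zero =>
    have : e = 0 := Nat.le_zero.mp h
    subst this
    simp [Sset, Tset]
  | succ d ih =>
    rcases Nat.lt_or_ge e (d + 1) with h' | h'
    · exact (ih (Nat.lt_succ_iff.mp h')).trans (by rw [Tset_succ]; exact Set.subset_union_left)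
    · have : e = d + 1 := le_antisymm h h'
      subst this
      rw [Tset_succ]
      exact Set.subset_union_right

lemma Tset_eq_biUnion (G : SimpleGraph V) (F : ℕ → Set V) (v₀ : V) (d : ℕ) :
    Tset G F v₀ d = ⋃ e ∈ Finset.range (d + 1), Sset G F v₀ e := by
  induction d with
  | zero => simp [Tset, Sset]
  | succ d ih =>
    rw [Tset_succ, ih]
    ext x
    simp only [Set.mem_union, Set.mem_iUnion, Finset.mem_range, exists_prop]
    constructor
    · rintro (⟨e, he, hx⟩ | hx)
      · exact ⟨e, by omega, hx⟩
      · exact ⟨d + 1, by omega, hx⟩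
    · rintro ⟨e, he, hx⟩
      rcases Nat.lt_or_ge e (d + 1) with h' | h'
      · exact Or.inl ⟨e, h', hx⟩
      · have : e = d + 1 := by omega
        subst this
        exact Or.inr hx

lemma ncard_biUnion_le_two_mul {V : Type*} [Fintype V] (A : Set V) (g : V → Set V)
    (h : ∀ u, (g u).ncard ≤ 2) : (⋃ u ∈ A, g u).ncard ≤ 2 * A.ncard := by
  have hA : A.Finite := A.toFinite
  refine Set.Finite.induction_on (motive := fun s _ => (⋃ u ∈ s, g u).ncard ≤ 2 * s.ncard) A hA
    (by simp) ?_
  intro a s ha hs ih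
  rw [Set.biUnion_insert, Set.ncard_insert_of_notMem ha hs]
  calc (g a ∪ ⋃ x ∈ s, g x).ncard ≤ (g a).ncard + (⋃ x ∈ s, g x).ncard :=
        Set.ncard_union_le _ _
    _ ≤ 2 + 2 * s.ncard := add_le_add (h a) ih
    _ = 2 * (s.ncard + 1) := by ring

end Aux

theorem stmt12 {V : Type*} [Fintype V] (G : SimpleGraph V) (hc : G.Connected)
    (k : ℕ) (hk : 3 ≤ k) (htr : tr2 G = k) :
    ∃ P : Fin k → Set V, TwoTransPart G k P ∧
      (P ⟨k - 1, by omega⟩).ncard = 1 ∧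
      (P ⟨k - 2, by omega⟩).ncard = 2 ∧
      ∀ i : ℕ, 2 ≤ i → i ≤ k - 2 → (P ⟨k - 1 - i, by omega⟩).ncard ≤ 2 * 3 ^ (i - 1) := by
  classical
  haveI hne : Nonempty V := hc.nonempty
  -- there exists a 2-transitive partition of size k
  have hmem : ∃ P : Fin k → Set V, TwoTransPart G k P := by
    have : k ∈ {k | ∃ P : Fin k → Set V, TwoTransPart G k P} := by
      rw [← htr]
      apply Nat.sSup_mem
      · refine ⟨1, fun _ => Set.univ, fun _ => Set.univ_nonempty, fun v => ⟨0, Set.mem_univ v,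
          fun j _ => Subsingleton.elim j 0⟩, fun i j hij => ?_⟩
        exfalso
        have hij' := Fin.lt_def.mp hij
        have hi := i.isLt
        have hj := j.isLt
        omega
      · refine ⟨Fintype.card V, fun m hm => ?_⟩
        obtain ⟨P, hP1, hP2, -⟩ := hm
        have hinj : Function.Injective (fun i : Fin m => (hP1 i).choose) := by
          intro i j hij
          simp only at hij
          have hi := (hP1 i).choose_spec
          have hj := (hP1 j).choose_spec
          obtain ⟨c, -, hu⟩ := hP2 (hP1 i).choose
          exact (hu i hi).trans (hu j (by rw [hij]; exact hj)).symm
        simpa using Fintype.card_le_of_injective _ hinj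
    exact this
  obtain ⟨P, hP1, hP2, hP3⟩ := hmem
  -- disjointness of the original parts
  have hPdisj : ∀ i j : Fin k, i ≠ j → ∀ x, x ∈ P i → x ∈ P j → False := by
    intro i j hij x hxi hxj
    obtain ⟨c, -, hu⟩ := hP2 x
    exact hij ((hu i hxi).trans (hu j hxj).symm)
  obtain ⟨v₀, hv₀⟩ := hP1 ⟨k - 1, by omega⟩
  set F : ℕ → Set V := fun d => P ⟨k - 2 - d, by omega⟩ with hF
  set S : ℕ → Set V := Sset G F v₀ with hS
  set T : ℕ → Set V := Tset G F v₀ with hT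
  -- each S d sits inside original part k-1-d
  have hSsubP : ∀ d, S d ⊆ P ⟨k - 1 - d, by omega⟩ := by
    intro d
    cases d with
    | zero => intro x hx; rw [hS] at hx; rw [Set.eq_of_mem_singleton hx]; exact hv₀
    | succ d =>
      intro x hx
      rw [hS] at hx
      simp only [Sset, Set.mem_iUnion] at hx
      obtain ⟨u, -, hx⟩ := hx
      have hxP : x ∈ P (⟨k - 2 - d, by omega⟩ : Fin k) := pick_subset G (F d) u hx
      have heq : (⟨k - 2 - d, by omega⟩ : Fin k) = ⟨k - 1 - (d + 1), by omega⟩ := by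
        apply Fin.ext
        show k - 2 - d = k - 1 - (d + 1)
        omega
      rwa [heq] at hxP
  -- v₀ belongs to every T d
  have hv₀T : ∀ d, v₀ ∈ T d :=
    fun d => Sset_subset_Tset G F v₀ (Nat.zero_le d) rfl
  -- existence of two distinct neighbors of v₀ in F d
  have hexv₀ : ∀ d, ∃ u w, u ∈ F d ∧ w ∈ F d ∧ u ≠ w ∧ G.Adj u v₀ ∧ G.Adj w v₀ := by
    intro d
    exact hP3 ⟨k - 2 - d, by omega⟩ ⟨k - 1, by omega⟩
      (Fin.lt_def.mpr (show k - 2 - d < k - 1 by omega)) v₀ hv₀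
  -- each S d is nonempty
  have hSne : ∀ d, (S d).Nonempty := by
    intro d
    cases d with
    | zero => exact ⟨v₀, rfl⟩
    | succ d =>
      obtain ⟨u, -, hu, -⟩ := pick_spec G (F d) v₀ (hexv₀ d)
      exact ⟨u, Set.mem_biUnion (hv₀T d) hu⟩
  -- membership in T (k-2) means membership in some S e with e ≤ k-2
  have hTmem : ∀ x, x ∈ T (k - 2) → ∃ e ≤ k - 2, x ∈ S e := by
    intro x hx
    rw [hT, Tset_eq_biUnion] at hx
    simp only [Set.mem_iUnion, Finset.mem_range, exists_prop] at hx
    obtain ⟨e, he, hx⟩ := hx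
    exact ⟨e, by omega, hx⟩
  -- distinct S levels are disjoint
  have hSdisj : ∀ d d', d ≤ k - 2 → d' ≤ k - 2 → d ≠ d' → ∀ x, x ∈ S d → x ∈ S d' → False := by
    intro d d' hd hd' hne' x hxd hxd'
    have hne2 : (⟨k - 1 - d, by omega⟩ : Fin k) ≠ ⟨k - 1 - d', by omega⟩ := by
      intro hc'
      have h2 : k - 1 - d = k - 1 - d' := congrArg Fin.val hc'
      omega
    exact hPdisj _ _ hne2 x (hSsubP d hxd) (hSsubP d' hxd')
  -- the new partition
  set Q : Fin k → Set V := fun i => if i.val = 0 then (T (k - 2))ᶜ else S (k - 1 - i.val)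
    with hQ
  have hQ0 : ∀ i : Fin k, i.val = 0 → Q i = (T (k - 2))ᶜ := by
    intro i hi; simp only [hQ]; rw [if_pos hi]
  have hQpos : ∀ i : Fin k, i.val ≠ 0 → Q i = S (k - 1 - i.val) := by
    intro i hi; simp only [hQ]; rw [if_neg hi]
  -- P 0 is contained in Q 0
  have hP0Q : P ⟨0, by omega⟩ ⊆ (T (k - 2))ᶜ := by
    intro x hx hxT
    obtain ⟨e, he, hxe⟩ := hTmem x hxT
    have hne2 : (⟨k - 1 - e, by omega⟩ : Fin k) ≠ ⟨0, by omega⟩ := by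
      intro hc'
      have h2 : k - 1 - e = 0 := congrArg Fin.val hc'
      omega
    exact hPdisj _ _ hne2 x (hSsubP e hxe) hx
  -- Q is a 2-transitive partition
  have hQtp : TwoTransPart G k Q := by
    refine ⟨?_, ?_, ?_⟩
    · -- nonempty
      intro i
      rcases Nat.eq_zero_or_pos i.val with hi | hi
      · rw [hQ0 i hi]
        obtain ⟨x, hx⟩ := hP1 ⟨0, by omega⟩
        exact ⟨x, hP0Q hx⟩
      · rw [hQpos i (by omega)]
        exact hSne _
    · -- partition
      intro v
      by_cases hv : v ∈ T (k - 2)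
      · obtain ⟨e, he, hve⟩ := hTmem v hv
        refine ⟨⟨k - 1 - e, by omega⟩, ?_, ?_⟩
        · show v ∈ Q ⟨k - 1 - e, by omega⟩
          rw [hQpos ⟨k - 1 - e, by omega⟩ (show k - 1 - e ≠ 0 by omega)]
          show v ∈ S (k - 1 - (k - 1 - e))
          rw [show k - 1 - (k - 1 - e) = e by omega]
          exact hve
        · intro j hj
          rcases Nat.eq_zero_or_pos j.val with hj0 | hj0
          · rw [hQ0 j hj0] at hj
            exact absurd hv hj
          · rw [hQpos j (by omega)] at hj
            apply Fin.ext
            show j.val = k - 1 - e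
            by_contra hne'
            have hjk := j.isLt
            exact hSdisj _ _ (by omega) (by omega) (by omega) v hj hve
      · refine ⟨⟨0, by omega⟩, ?_, ?_⟩
        · show v ∈ Q ⟨0, by omega⟩
          rw [hQ0 ⟨0, by omega⟩ rfl]
          exact hv
        · intro j hj
          rcases Nat.eq_zero_or_pos j.val with hj0 | hj0
          · exact Fin.ext hj0
          · rw [hQpos j (by omega)] at hj
            rw [hS] at hj
            exact absurd (Sset_subset_Tset G F v₀ (by have := j.isLt; omega) hj) hv
    · -- 2-transitivity
      intro i j hij v hv
      have hj0 : 0 < j.val := lt_of_le_of_lt (Nat.zero_le _) (Fin.lt_def.mp hij)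
      have hjk := j.isLt
      rw [hQpos j (by omega)] at hv
      have hvPj : v ∈ P j := by
        have h1 := hSsubP (k - 1 - j.val) hv
        have heq : (⟨k - 1 - (k - 1 - j.val), by omega⟩ : Fin k) = j :=
          Fin.ext (show k - 1 - (k - 1 - j.val) = j.val by omega)
        rwa [heq] at h1
      rcases Nat.eq_zero_or_pos i.val with hi0 | hi0
      · -- i = 0 : use original neighbors in P 0
        obtain ⟨u, w, hu, hw, hne', ha1, ha2⟩ :=
          hP3 ⟨0, by omega⟩ j (Fin.lt_def.mpr (show 0 < j.val by omega)) v hvPj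
        rw [hQ0 i hi0]
        exact ⟨u, w, hP0Q hu, hP0Q hw, hne', ha1, ha2⟩
      · -- i ≥ 1 : use the picked pair
        have hiv := Fin.lt_def.mp hij
        have hik : i.val ≤ k - 2 := by omega
        have hd1 : 1 ≤ k - 1 - i.val := by omega
        have hidx : (⟨k - 2 - (k - 1 - i.val - 1), by omega⟩ : Fin k) = i := by
          apply Fin.ext
          show k - 2 - (k - 1 - i.val - 1) = i.val
          omega
        have hFd : F (k - 1 - i.val - 1) = P i := congrArg P hidx
        have hvT : v ∈ T (k - 1 - i.val - 1) :=
          Sset_subset_Tset G F v₀ (show k - 1 - j.val ≤ k - 1 - i.val - 1 by omega) hv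
        obtain ⟨u, w, hu, hw, hne', ha1, ha2⟩ :=
          pick_spec G (F (k - 1 - i.val - 1)) v (hFd ▸ hP3 i j hij v hvPj)
        rw [hQpos i (by omega), hS,
          show k - 1 - i.val = (k - 1 - i.val - 1) + 1 by omega]
        exact ⟨u, w, Set.mem_biUnion hvT hu, Set.mem_biUnion hvT hw, hne', ha1, ha2⟩
  -- cardinality bounds
  have hTcard : ∀ d, (T d).ncard ≤ 3 ^ d := by
    intro d
    induction d with
    | zero =>
      rw [hT]
      show ({v₀} : Set V).ncard ≤ 3 ^ 0
      simp
    | succ d ih =>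
      rw [hT, Tset_succ, ← hT, ← hS]
      calc (T d ∪ S (d + 1)).ncard ≤ (T d).ncard + (S (d + 1)).ncard :=
            Set.ncard_union_le _ _
        _ ≤ 3 ^ d + 2 * (T d).ncard := by
            refine add_le_add ih ?_
            rw [hS]
            show (⋃ u ∈ Tset G F v₀ d, pick G (F d) u).ncard ≤ 2 * (T d).ncard
            rw [hT]
            exact ncard_biUnion_le_two_mul _ _ (fun u => pick_ncard_le G (F d) u)
        _ ≤ 3 ^ d + 2 * 3 ^ d := by omega
        _ = 3 ^ (d + 1) := by ring
  refine ⟨Q, hQtp, ?_, ?_, ?_⟩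
  · rw [hQpos ⟨k - 1, by omega⟩ (show k - 1 ≠ 0 by omega)]
    show (S (k - 1 - (k - 1))).ncard = 1
    rw [show k - 1 - (k - 1) = 0 by omega, hS]
    show ({v₀} : Set V).ncard = 1
    exact Set.ncard_singleton v₀
  · rw [hQpos ⟨k - 2, by omega⟩ (show k - 2 ≠ 0 by omega)]
    show (S (k - 1 - (k - 2))).ncard = 2
    rw [show k - 1 - (k - 2) = 1 by omega, hS]
    have h1 : Sset G F v₀ 1 = pick G (F 0) v₀ := by
      show (⋃ u ∈ Tset G F v₀ 0, pick G (F 0) u) = pick G (F 0) v₀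
      show (⋃ u ∈ ({v₀} : Set V), pick G (F 0) u) = pick G (F 0) v₀
      simp
    rw [h1]
    exact pick_ncard_eq G (F 0) v₀ (hexv₀ 0)
  · intro i hi2 hik
    rw [hQpos ⟨k - 1 - i, by omega⟩ (show k - 1 - i ≠ 0 by omega)]
    show (S (k - 1 - (k - 1 - i))).ncard ≤ 2 * 3 ^ (i - 1)
    rw [show k - 1 - (k - 1 - i) = i by omega, hS,
      show i = (i - 1) + 1 by omega]
    calc (Sset G F v₀ ((i - 1) + 1)).ncard ≤ 2 * (Tset G F v₀ (i - 1)).ncard := by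
          show (⋃ u ∈ Tset G F v₀ (i - 1), pick G (F (i - 1)) u).ncard ≤ _
          exact ncard_biUnion_le_two_mul _ _ (fun u => pick_ncard_le G (F (i - 1)) u)
      _ ≤ 2 * 3 ^ (i - 1) := by
          have := hTcard (i - 1)
          rw [hT] at this
          omega
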